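/- Let D be the derivation on ℤ[a,x,y,z] with D(a) = az, D(x) = D(y) = D(z) = xy. Then for every n ≥ 0, Dⁿ(a) = a·F_n(x,y,z), where F_n(x,y,z) = Σ_{σ ∈ S_n} x^{exc(σ)} y^{drop(σ)} z^{fix(σ)} and F_0 = 1. -/

import Mathlib

open Finset

/-- The value `σ(i)` of a permutation of `{1,…,n}` at a one-based position `i`,
with the convention `σ(0) = 0` (and value `0` outside `[1,n]`). -/
def pv {n : ℕ} (σ : Equiv.Perm (Fin n)) (i : ℕ) : ℕ :=
  if h : 1 ≤ i ∧ i ≤ n then ((σ ⟨i - 1, by omega⟩ : Fin n) : ℕ) + 1 else 0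

/-- Number of excedances: indices `i` with `σ(i) > i`. -/
def exc {n : ℕ} (σ : Equiv.Perm (Fin n)) : ℕ :=
  ((Finset.Icc 1 n).filter (fun i => i < pv σ i)).card

/-- Number of fixed points: indices `i` with `σ(i) = i`. -/
def fixpt {n : ℕ} (σ : Equiv.Perm (Fin n)) : ℕ :=
  ((Finset.Icc 1 n).filter (fun i => pv σ i = i)).card

/-- Number of left successions: indices `1 ≤ i ≤ n` with `σ(i-1) + 1 = σ(i)`. -/
def lsuc {n : ℕ} (σ : Equiv.Perm (Fin n)) : ℕ :=
  ((Finset.Icc 1 n).filter (fun i => pv σ (i - 1) + 1 = pv σ i)).card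

/-- Number of jumps: indices `1 ≤ i ≤ n` with `σ(i) ≥ σ(i-1) + 2`. -/
def jump {n : ℕ} (σ : Equiv.Perm (Fin n)) : ℕ :=
  ((Finset.Icc 1 n).filter (fun i => pv σ (i - 1) + 2 ≤ pv σ i)).card

/-- Number of drops: indices `i` with `σ(i) < i`. -/
def dropStat {n : ℕ} (σ : Equiv.Perm (Fin n)) : ℕ :=
  ((Finset.Icc 1 n).filter (fun i => pv σ i < i)).card

open MvPolynomial

/-- `F_n(x,y,z)` with `x = X 1`, `y = X 2`, `z = X 3` in `ℤ[a,x,y,z]` (`a = X 0`). -/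
noncomputable def Fpoly (n : ℕ) : MvPolynomial (Fin 4) ℤ :=
  ∑ σ : Equiv.Perm (Fin n), X 1 ^ exc σ * X 2 ^ dropStat σ * X 3 ^ fixpt σ

/-! ### Auxiliary material for the proof -/

section Aux

theorem stat_card {n : ℕ} (σ : Equiv.Perm (Fin n)) (p : ℕ → ℕ → Prop)
    [∀ a b : ℕ, Decidable (p a b)] :
    ((Finset.Icc 1 n).filter (fun i => p i (pv σ i))).card
      = (Finset.univ.filter (fun i : Fin n => p ((i : ℕ) + 1) ((σ i : ℕ) + 1))).card := by
  refine Finset.card_bij' (fun a ha => (⟨a - 1, by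
      simp only [Finset.mem_filter, Finset.mem_Icc] at ha; omega⟩ : Fin n))
    (fun b _ => (b : ℕ) + 1) ?_ ?_ ?_ ?_
  · intro a ha
    simp only [Finset.mem_filter, Finset.mem_Icc] at ha ⊢
    obtain ⟨⟨h1, h2⟩, hp⟩ := ha
    rw [pv, dif_pos ⟨h1, h2⟩] at hp
    refine ⟨Finset.mem_univ _, ?_⟩
    convert hp using 2 <;> omega
  · intro b hb
    simp only [Finset.mem_filter, Finset.mem_univ, true_and] at hb ⊢
    have hb' : 1 ≤ (b : ℕ) + 1 ∧ (b : ℕ) + 1 ≤ n := ⟨by omega, b.isLt⟩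
    refine ⟨Finset.mem_Icc.2 ⟨hb'.1, hb'.2⟩, ?_⟩
    rw [pv, dif_pos hb']
    convert hb using 3
    exact congrArg σ (Fin.ext (by simp))
  · intro a ha
    simp only [Finset.mem_filter, Finset.mem_Icc] at ha
    simp only [Fin.val_mk]
    omega
  · intro b _
    exact Fin.ext (by simp)

theorem exc_eq {n : ℕ} (σ : Equiv.Perm (Fin n)) :
    exc σ = (Finset.univ.filter (fun i : Fin n => (i : ℕ) < (σ i : ℕ))).card := by
  rw [exc, stat_card σ (· < ·)]
  congr 1
  apply Finset.filter_congr
  intro i _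
  simp

theorem drop_eq {n : ℕ} (σ : Equiv.Perm (Fin n)) :
    dropStat σ = (Finset.univ.filter (fun i : Fin n => (σ i : ℕ) < (i : ℕ))).card := by
  rw [dropStat, stat_card σ (fun a b => b < a)]
  congr 1
  apply Finset.filter_congr
  intro i _
  simp

theorem fix_eq {n : ℕ} (σ : Equiv.Perm (Fin n)) :
    fixpt σ = (Finset.univ.filter (fun i : Fin n => (σ i : ℕ) = (i : ℕ))).card := by
  rw [fixpt, stat_card σ (fun a b => b = a)]
  congr 1
  apply Finset.filter_congr
  intro i _
  simp

theorem exc_sum {n : ℕ} (σ : Equiv.Perm (Fin n)) :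
    exc σ = ∑ i : Fin n, if (i : ℕ) < (σ i : ℕ) then 1 else 0 := by
  rw [exc_eq, Finset.card_filter]

theorem drop_sum {n : ℕ} (σ : Equiv.Perm (Fin n)) :
    dropStat σ = ∑ i : Fin n, if (σ i : ℕ) < (i : ℕ) then 1 else 0 := by
  rw [drop_eq, Finset.card_filter]

theorem fix_sum {n : ℕ} (σ : Equiv.Perm (Fin n)) :
    fixpt σ = ∑ i : Fin n, if (σ i : ℕ) = (i : ℕ) then 1 else 0 := by
  rw [fix_eq, Finset.card_filter]

/-- Insert the value `n` into the cycle structure of `σ` right before the value `j`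
(or as a fixed point if `j = last n`). -/
def ins {n : ℕ} (j : Fin (n + 1)) (σ : Equiv.Perm (Fin n)) : Equiv.Perm (Fin (n + 1)) :=
  (Equiv.permCongr finSuccEquivLast).symm
    (Equiv.Perm.decomposeOption.symm (finSuccEquivLast j, σ))

def insEquiv (n : ℕ) : Fin (n + 1) × Equiv.Perm (Fin n) ≃ Equiv.Perm (Fin (n + 1)) :=
  ((Equiv.prodCongr finSuccEquivLast (Equiv.refl _)).trans
    Equiv.Perm.decomposeOption.symm).trans (Equiv.permCongr finSuccEquivLast).symm

theorem insEquiv_apply {n : ℕ} (j : Fin (n + 1)) (σ : Equiv.Perm (Fin n)) :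
    insEquiv n (j, σ) = ins j σ := rfl

theorem ins_apply {n : ℕ} (j : Fin (n + 1)) (σ : Equiv.Perm (Fin n)) (x : Fin (n + 1)) :
    ins j σ x = finSuccEquivLast.symm
      ((Equiv.swap none (finSuccEquivLast j)) ((finSuccEquivLast x).map σ)) := by
  simp [ins, Equiv.permCongr_apply, Equiv.Perm.decomposeOption_symm_apply]

theorem ins_apply_last {n : ℕ} (j : Fin (n + 1)) (σ : Equiv.Perm (Fin n)) :
    ins j σ (Fin.last n) = j := by
  simp [ins_apply]

theorem ins_last_castSucc {n : ℕ} (σ : Equiv.Perm (Fin n)) (i : Fin n) :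
    ins (Fin.last n) σ (Fin.castSucc i) = Fin.castSucc (σ i) := by
  simp [ins_apply]

theorem ins_castSucc_castSucc {n : ℕ} (j0 : Fin n) (σ : Equiv.Perm (Fin n)) (i : Fin n) :
    ins (Fin.castSucc j0) σ (Fin.castSucc i)
      = if σ i = j0 then Fin.last n else Fin.castSucc (σ i) := by
  by_cases h : σ i = j0
  · simp [ins_apply, h]
  · rw [ins_apply]
    simp only [finSuccEquivLast_castSucc, Option.map_some]
    rw [Equiv.swap_apply_of_ne_of_ne (by simp) (by simpa using h)]
    simp [h]

theorem ins_i0_castSucc {n : ℕ} (σ : Equiv.Perm (Fin n)) (i0 i : Fin n) :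
    ins (Fin.castSucc (σ i0)) σ (Fin.castSucc i)
      = if i = i0 then Fin.last n else Fin.castSucc (σ i) := by
  rw [ins_castSucc_castSucc]
  simp

theorem exc_ins_last {n : ℕ} (σ : Equiv.Perm (Fin n)) :
    exc (ins (Fin.last n) σ) = exc σ := by
  rw [exc_sum, exc_sum, Fin.sum_univ_castSucc]
  simp [ins_last_castSucc, ins_apply_last]

theorem drop_ins_last {n : ℕ} (σ : Equiv.Perm (Fin n)) :
    dropStat (ins (Fin.last n) σ) = dropStat σ := by
  rw [drop_sum, drop_sum, Fin.sum_univ_castSucc]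
  simp [ins_last_castSucc, ins_apply_last]

theorem fix_ins_last {n : ℕ} (σ : Equiv.Perm (Fin n)) :
    fixpt (ins (Fin.last n) σ) = fixpt σ + 1 := by
  rw [fix_sum, fix_sum, Fin.sum_univ_castSucc]
  simp [ins_last_castSucc, ins_apply_last]

theorem exc_ins_castSucc {n : ℕ} (σ : Equiv.Perm (Fin n)) (i0 : Fin n) :
    exc (ins (Fin.castSucc (σ i0)) σ) + (if (i0 : ℕ) < (σ i0 : ℕ) then 1 else 0)
      = exc σ + 1 := by
  rw [exc_sum, exc_sum, Fin.sum_univ_castSucc]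
  simp only [ins_i0_castSucc, ins_apply_last, Fin.coe_castSucc, Fin.val_last]
  have h1 : ∀ i : Fin n,
      (if (i : ℕ) < (((if i = i0 then Fin.last n else Fin.castSucc (σ i)) : Fin (n+1)) : ℕ)
        then 1 else 0)
      = if i = i0 then 1 else (if (i : ℕ) < (σ i : ℕ) then 1 else 0) := by
    intro i
    by_cases h : i = i0 <;> simp [h, i0.isLt]
  simp only [h1]
  rw [← Finset.sum_erase_add Finset.univ _ (Finset.mem_univ i0),
    ← Finset.sum_erase_add Finset.univ
      (fun i : Fin n => if (i : ℕ) < (σ i : ℕ) then 1 else 0) (Finset.mem_univ i0)]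
  rw [(Finset.sum_congr rfl
    (fun i hi => if_neg (Finset.ne_of_mem_erase hi)) :
      ∑ i ∈ Finset.univ.erase i0,
        (if i = i0 then 1 else (if (i : ℕ) < (σ i : ℕ) then 1 else 0))
      = ∑ i ∈ Finset.univ.erase i0, (if (i : ℕ) < (σ i : ℕ) then 1 else 0))]
  have h2 : ¬ ((n : ℕ) < (σ i0 : ℕ)) := by omega
  simp [h2]
  omega

theorem drop_ins_castSucc {n : ℕ} (σ : Equiv.Perm (Fin n)) (i0 : Fin n) :
    dropStat (ins (Fin.castSucc (σ i0)) σ) + (if (σ i0 : ℕ) < (i0 : ℕ) then 1 else 0)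
      = dropStat σ + 1 := by
  rw [drop_sum, drop_sum, Fin.sum_univ_castSucc]
  simp only [ins_i0_castSucc, ins_apply_last, Fin.coe_castSucc, Fin.val_last]
  have h1 : ∀ i : Fin n,
      (if (((if i = i0 then Fin.last n else Fin.castSucc (σ i)) : Fin (n+1)) : ℕ) < (i : ℕ)
        then 1 else 0)
      = if i = i0 then 0 else (if (σ i : ℕ) < (i : ℕ) then 1 else 0) := by
    intro i
    by_cases h : i = i0 <;> simp [h] <;> try omega
  simp only [h1]
  rw [← Finset.sum_erase_add Finset.univ _ (Finset.mem_univ i0),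
    ← Finset.sum_erase_add Finset.univ
      (fun i : Fin n => if (σ i : ℕ) < (i : ℕ) then 1 else 0) (Finset.mem_univ i0)]
  rw [(Finset.sum_congr rfl
    (fun i hi => if_neg (Finset.ne_of_mem_erase hi)) :
      ∑ i ∈ Finset.univ.erase i0,
        (if i = i0 then 0 else (if (σ i : ℕ) < (i : ℕ) then 1 else 0))
      = ∑ i ∈ Finset.univ.erase i0, (if (σ i : ℕ) < (i : ℕ) then 1 else 0))]
  have h2 : ((σ i0 : ℕ) < (n : ℕ)) := (σ i0).isLt
  simp [h2]
  omega

theorem fix_ins_castSucc {n : ℕ} (σ : Equiv.Perm (Fin n)) (i0 : Fin n) :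
    fixpt (ins (Fin.castSucc (σ i0)) σ) + (if (σ i0 : ℕ) = (i0 : ℕ) then 1 else 0)
      = fixpt σ := by
  rw [fix_sum, fix_sum, Fin.sum_univ_castSucc]
  simp only [ins_i0_castSucc, ins_apply_last, Fin.coe_castSucc, Fin.val_last]
  have h1 : ∀ i : Fin n,
      (if (((if i = i0 then Fin.last n else Fin.castSucc (σ i)) : Fin (n+1)) : ℕ) = (i : ℕ)
        then 1 else 0)
      = if i = i0 then 0 else (if (σ i : ℕ) = (i : ℕ) then 1 else 0) := by
    intro i
    by_cases h : i = i0 <;> simp [h] <;> try omega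
  simp only [h1]
  rw [← Finset.sum_erase_add Finset.univ _ (Finset.mem_univ i0),
    ← Finset.sum_erase_add Finset.univ
      (fun i : Fin n => if (σ i : ℕ) = (i : ℕ) then 1 else 0) (Finset.mem_univ i0)]
  rw [(Finset.sum_congr rfl
    (fun i hi => if_neg (Finset.ne_of_mem_erase hi)) :
      ∑ i ∈ Finset.univ.erase i0,
        (if i = i0 then 0 else (if (σ i : ℕ) = (i : ℕ) then 1 else 0))
      = ∑ i ∈ Finset.univ.erase i0, (if (σ i : ℕ) = (i : ℕ) then 1 else 0))]
  have h2 : ¬ ((σ i0 : ℕ) = (n : ℕ)) := by have := (σ i0).isLt; omega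
  simp [h2]

/-- The monomial attached to a permutation. -/
noncomputable def dmon (e d f : ℕ) : MvPolynomial (Fin 4) ℤ :=
  X 1 ^ e * X 2 ^ d * X 3 ^ f

theorem mono_ins {n : ℕ} (σ : Equiv.Perm (Fin n)) (i0 : Fin n) :
    dmon (exc (ins (Fin.castSucc (σ i0)) σ)) (dropStat (ins (Fin.castSucc (σ i0)) σ))
        (fixpt (ins (Fin.castSucc (σ i0)) σ))
      = if (i0 : ℕ) < (σ i0 : ℕ) then dmon (exc σ) (dropStat σ + 1) (fixpt σ)
        else if (σ i0 : ℕ) < (i0 : ℕ) then dmon (exc σ + 1) (dropStat σ) (fixpt σ)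
        else dmon (exc σ + 1) (dropStat σ + 1) (fixpt σ - 1) := by
  have h1 := exc_ins_castSucc σ i0
  have h2 := drop_ins_castSucc σ i0
  have h3 := fix_ins_castSucc σ i0
  rcases lt_trichotomy ((i0 : ℕ)) ((σ i0 : ℕ)) with h | h | h
  · rw [if_pos h]
    rw [if_pos h] at h1
    rw [if_neg (by omega)] at h2
    rw [if_neg (by omega)] at h3
    rw [show exc (ins (Fin.castSucc (σ i0)) σ) = exc σ from by omega,
      show dropStat (ins (Fin.castSucc (σ i0)) σ) = dropStat σ + 1 from by omega,
      show fixpt (ins (Fin.castSucc (σ i0)) σ) = fixpt σ from by omega]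
  · rw [if_neg (by omega), if_neg (by omega)]
    rw [if_neg (by omega)] at h1
    rw [if_neg (by omega)] at h2
    rw [if_pos (by omega)] at h3
    rw [show exc (ins (Fin.castSucc (σ i0)) σ) = exc σ + 1 from by omega,
      show dropStat (ins (Fin.castSucc (σ i0)) σ) = dropStat σ + 1 from by omega,
      show fixpt (ins (Fin.castSucc (σ i0)) σ) = fixpt σ - 1 from by omega]
  · rw [if_neg (by omega), if_pos h]
    rw [if_neg (by omega)] at h1
    rw [if_neg (by omega)] at h3
    rw [if_pos h] at h2
    rw [show exc (ins (Fin.castSucc (σ i0)) σ) = exc σ + 1 from by omega,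
      show dropStat (ins (Fin.castSucc (σ i0)) σ) = dropStat σ from by omega,
      show fixpt (ins (Fin.castSucc (σ i0)) σ) = fixpt σ from by omega]

end Aux

section Sums

theorem sum_ins_mono {n : ℕ} (σ : Equiv.Perm (Fin n)) :
    ∑ j : Fin (n + 1), dmon (exc (ins j σ)) (dropStat (ins j σ)) (fixpt (ins j σ))
      = X 3 * dmon (exc σ) (dropStat σ) (fixpt σ)
        + ((exc σ) • dmon (exc σ) (dropStat σ + 1) (fixpt σ)
          + (dropStat σ) • dmon (exc σ + 1) (dropStat σ) (fixpt σ)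
          + (fixpt σ) • dmon (exc σ + 1) (dropStat σ + 1) (fixpt σ - 1)) := by
  rw [Fin.sum_univ_castSucc]
  have hlast : dmon (exc (ins (Fin.last n) σ)) (dropStat (ins (Fin.last n) σ))
      (fixpt (ins (Fin.last n) σ)) = X 3 * dmon (exc σ) (dropStat σ) (fixpt σ) := by
    rw [exc_ins_last, drop_ins_last, fix_ins_last, dmon, dmon, pow_succ]
    ring
  rw [hlast]
  have hmain : ∑ j0 : Fin n, dmon (exc (ins (Fin.castSucc j0) σ))
      (dropStat (ins (Fin.castSucc j0) σ)) (fixpt (ins (Fin.castSucc j0) σ))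
      = (exc σ) • dmon (exc σ) (dropStat σ + 1) (fixpt σ)
        + (dropStat σ) • dmon (exc σ + 1) (dropStat σ) (fixpt σ)
        + (fixpt σ) • dmon (exc σ + 1) (dropStat σ + 1) (fixpt σ - 1) := by
    rw [← Equiv.sum_comp σ (fun j0 => dmon (exc (ins (Fin.castSucc j0) σ))
      (dropStat (ins (Fin.castSucc j0) σ)) (fixpt (ins (Fin.castSucc j0) σ)))]
    have := fun i0 => mono_ins σ i0
    rw [Finset.sum_congr rfl (fun i0 _ => mono_ins σ i0)]
    rw [Finset.sum_ite, Finset.sum_ite]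
    rw [Finset.sum_const, Finset.sum_const, Finset.sum_const]
    have hA : (Finset.univ.filter (fun i : Fin n => (i : ℕ) < (σ i : ℕ))).card = exc σ :=
      (exc_eq σ).symm
    have hB : ((Finset.univ.filter (fun i : Fin n => ¬ (i : ℕ) < (σ i : ℕ))).filter
        (fun i : Fin n => (σ i : ℕ) < (i : ℕ))).card = dropStat σ := by
      rw [Finset.filter_filter, drop_eq]
      congr 1
      apply Finset.filter_congr
      intro i _
      constructor
      · rintro ⟨-, h⟩; exact h
      · intro h; exact ⟨by omega, h⟩
    have hC : ((Finset.univ.filter (fun i : Fin n => ¬ (i : ℕ) < (σ i : ℕ))).filter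
        (fun i : Fin n => ¬ (σ i : ℕ) < (i : ℕ))).card = fixpt σ := by
      rw [Finset.filter_filter, fix_eq]
      congr 1
      apply Finset.filter_congr
      intro i _
      constructor
      · rintro ⟨h1, h2⟩; omega
      · intro h; omega
    rw [hA, hB, hC]
    abel
  rw [hmain]
  ring

end Sums

section Der

variable (D : Derivation ℤ (MvPolynomial (Fin 4) ℤ) (MvPolynomial (Fin 4) ℤ))
variable (hx : D (X 1) = X 1 * X 2) (hy : D (X 2) = X 1 * X 2) (hz : D (X 3) = X 1 * X 2)

include hx hy hz in
theorem D_dmon (e d f : ℕ) :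
    D (dmon e d f) = e • dmon e (d + 1) f + d • dmon (e + 1) d f
      + f • dmon (e + 1) (d + 1) (f - 1) := by
  rw [dmon, Derivation.leibniz, Derivation.leibniz, Derivation.leibniz_pow,
    Derivation.leibniz_pow, Derivation.leibniz_pow, hx, hy, hz]
  rcases e with _ | e <;> rcases d with _ | d <;> rcases f with _ | f <;>
    simp only [dmon, smul_eq_mul, nsmul_eq_mul, Nat.succ_sub_one, Nat.add_sub_cancel,
      Nat.cast_zero, Nat.cast_succ, pow_zero, zero_mul, mul_zero, zero_add, add_zero,
      mul_one, one_mul] <;>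
    (try push_cast) <;> ring

include hx hy hz in
theorem Fpoly_succ (n : ℕ) :
    Fpoly (n + 1) = X 3 * Fpoly n + D (Fpoly n) := by
  have h0 : Fpoly (n + 1) = ∑ τ : Equiv.Perm (Fin (n + 1)),
      dmon (exc τ) (dropStat τ) (fixpt τ) := rfl
  rw [h0, ← Equiv.sum_comp (insEquiv n)
    (fun τ => dmon (exc τ) (dropStat τ) (fixpt τ)), Fintype.sum_prod_type,
    Finset.sum_comm]
  have h1 : ∀ σ : Equiv.Perm (Fin n), ∑ j : Fin (n + 1),
      dmon (exc (insEquiv n (j, σ))) (dropStat (insEquiv n (j, σ)))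
        (fixpt (insEquiv n (j, σ)))
      = X 3 * dmon (exc σ) (dropStat σ) (fixpt σ)
        + D (dmon (exc σ) (dropStat σ) (fixpt σ)) := by
    intro σ
    simp only [insEquiv_apply]
    rw [sum_ins_mono, D_dmon D hx hy hz]
  rw [Finset.sum_congr rfl (fun σ _ => h1 σ), Finset.sum_add_distrib,
    ← Finset.mul_sum, ← map_sum]
  rfl

end Der

/-- Dumont's theorem: for the derivation `D` on `ℤ[a,x,y,z]` with `D a = a z`,
`D x = D y = D z = x y`, we have `Dⁿ(a) = a F_n(x,y,z)`. -/
theorem dumont (D : Derivation ℤ (MvPolynomial (Fin 4) ℤ) (MvPolynomial (Fin 4) ℤ))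
    (ha : D (X 0) = X 0 * X 3) (hx : D (X 1) = X 1 * X 2)
    (hy : D (X 2) = X 1 * X 2) (hz : D (X 3) = X 1 * X 2) (n : ℕ) :
    (⇑D)^[n] (X 0) = X 0 * Fpoly n := by
  induction n with
  | zero =>
    have : Fpoly 0 = 1 := by
      simp [Fpoly, exc, dropStat, fixpt]
    simp [this]
  | succ n ih =>
    rw [Function.iterate_succ_apply', ih, Derivation.leibniz,
      Fpoly_succ D hx hy hz n, ha]
    simp only [smul_eq_mul]
    ring
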